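/- If T: E → F is order almost Dunford-Pettis and S: F → G is almost interval preserving, then the composition S∘T is order almost Dunford-Pettis. -/

import Mathlib

open Filter Topology Pointwise

variable {E F G X : Type*}

section Defs

variable [NormedAddCommGroup E] [Lattice E] [HasSolidNorm E] [IsOrderedAddMonoid E] [NormedSpace ℝ E]

/-- `|f|` of a functional evaluated at `x ≥ 0`: `sup {f y : |y| ≤ x}`. -/
noncomputable def absEval (f : E →L[ℝ] ℝ) (x : E) : ℝ :=
  ⨆ y : {y : E // |y| ≤ x}, f y.1

/-- `|f| ⊓ |g| = 0` in the dual lattice, via the Riesz-Kantorovich formula. -/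
def DisjointPair (f g : E →L[ℝ] ℝ) : Prop :=
  ∀ x : E, 0 ≤ x →
    (⨅ y : {y : E // 0 ≤ y ∧ y ≤ x}, (absEval f y.1 + absEval g (x - y.1))) = 0

/-- A pairwise disjoint sequence of functionals. -/
def DisjointSeqDual (f : ℕ → E →L[ℝ] ℝ) : Prop :=
  ∀ n m, n ≠ m → DisjointPair (f n) (f m)

/-- A weakly null sequence in a normed space. -/
def WeaklyNullSeq {Y : Type*} [NormedAddCommGroup Y] [NormedSpace ℝ Y] (y : ℕ → Y) : Prop :=
  ∀ φ : Y →L[ℝ] ℝ, Tendsto (fun n => φ (y n)) atTop (𝓝 0)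

/-- An almost Dunford-Pettis set: disjoint weakly null sequences in the dual converge
uniformly to zero on it. -/
def AlmostDPSet (A : Set E) : Prop :=
  ∀ f : ℕ → E →L[ℝ] ℝ, DisjointSeqDual f → WeaklyNullSeq f →
    Tendsto (fun n => ⨆ a : A, |f n a.1|) atTop (𝓝 0)

end Defs

variable [NormedAddCommGroup E] [Lattice E] [HasSolidNorm E] [IsOrderedAddMonoid E] [NormedSpace ℝ E]
  [NormedAddCommGroup F] [Lattice F] [HasSolidNorm F] [IsOrderedAddMonoid F] [NormedSpace ℝ F] in
/-- An order almost Dunford-Pettis operator: the image of each order interval `[-x, x]`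
is an almost Dunford-Pettis set. -/
def OrderAlmostDP (T : E →L[ℝ] F) : Prop :=
  ∀ x : E, 0 ≤ x → AlmostDPSet (T '' Set.Icc (-x) x)

variable [NormedAddCommGroup E] [Lattice E] [HasSolidNorm E] [IsOrderedAddMonoid E] [NormedSpace ℝ E]
  [NormedAddCommGroup F] [Lattice F] [HasSolidNorm F] [IsOrderedAddMonoid F] [NormedSpace ℝ F] in
/-- An almost interval preserving operator: positive, with `T[0,x]` dense in `[0,Tx]`. -/
def AlmostIntervalPreserving (T : E →L[ℝ] F) : Prop :=
  (∀ x : E, 0 ≤ x → 0 ≤ T x) ∧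
    ∀ x : E, 0 ≤ x → Set.Icc (0 : F) (T x) ⊆ closure (T '' Set.Icc 0 x)


section AuxLemmas

variable [NormedAddCommGroup E] [Lattice E] [HasSolidNorm E] [IsOrderedAddMonoid E] [NormedSpace ℝ E]

lemma absEval_bddAbove (f : E →L[ℝ] ℝ) {x : E} (hx : 0 ≤ x) :
    BddAbove (Set.range fun y : {y : E // |y| ≤ x} => f y.1) := by
  refine ⟨‖f‖ * ‖x‖, ?_⟩
  rintro r ⟨⟨y, hy⟩, rfl⟩
  have h1 : f y ≤ ‖f‖ * ‖y‖ := (le_abs_self _).trans (f.le_opNorm y)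
  have h2 : ‖y‖ ≤ ‖x‖ := norm_le_norm_of_abs_le_abs (by rwa [abs_of_nonneg hx] : |y| ≤ |x|)
  exact h1.trans (mul_le_mul_of_nonneg_left h2 (norm_nonneg f))

lemma absEval_nonneg (f : E →L[ℝ] ℝ) {x : E} (hx : 0 ≤ x) : 0 ≤ absEval f x := by
  have := le_ciSup (absEval_bddAbove f hx) (⟨0, by simpa using hx⟩ : {y : E // |y| ≤ x})
  simp at this; exact this

/-- Lipschitz-type estimate for `absEval` on the positive cone. -/
lemma absEval_le_add (f : E →L[ℝ] ℝ) {a b : E} (ha : 0 ≤ a) (hb : 0 ≤ b) :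
    absEval f a ≤ absEval f b + ‖f‖ * ‖a - b‖ := by
  have hne : Nonempty {y : E // |y| ≤ a} := ⟨⟨0, by simpa using ha⟩⟩
  refine ciSup_le ?_
  rintro ⟨y, hy⟩
  set w : E := (y ⊓ b) ⊔ (-b) with hw
  have hwb : |w| ≤ b := by
    rw [abs_le']
    refine ⟨sup_le inf_le_right (neg_le_self hb), ?_⟩
    rw [neg_le]
    exact le_sup_right
  have hyw : |y - w| ≤ |a - b| := by
    have key : |y - w| ≤ (|y| - b) ⊔ 0 := by
      rw [abs_le']
      constructor
      · have h1 : y - w ≤ y - (y ⊓ b) := by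
          have : y ⊓ b ≤ w := le_sup_left
          exact sub_le_sub_left this y
        refine h1.trans ?_
        rw [sub_inf]
        refine sup_le ?_ ?_
        · simpa using le_sup_right
        · have : y - b ≤ |y| - b := sub_le_sub_right (le_abs_self y) b
          exact this.trans le_sup_left
      · rw [neg_sub]
        calc w - y = ((y ⊓ b) - y) ⊔ ((-b) - y) := by rw [hw, sup_sub]
          _ ≤ (|y| - b) ⊔ 0 := by
            refine sup_le ?_ ?_
            · exact le_trans (sub_nonpos.2 inf_le_left) le_sup_right
            · refine le_trans ?_ le_sup_left
              have h5 : -b - y = -y - b := by abel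
              rw [h5]
              exact sub_le_sub_right (neg_le_abs y) b
    refine key.trans ?_
    have h2 : (|y| - b) ⊔ 0 ≤ (a - b) ⊔ 0 := by
      have : |y| - b ≤ a - b := sub_le_sub_right hy b
      exact sup_le (this.trans le_sup_left) le_sup_right
    exact h2.trans (sup_le (le_abs_self _) (abs_nonneg _))
  have hfy : f y = f w + f (y - w) := by rw [← map_add]; congr 1; abel
  have h3 : f w ≤ absEval f b := le_ciSup (absEval_bddAbove f hb) ⟨w, hwb⟩
  have h4 : f (y - w) ≤ ‖f‖ * ‖a - b‖ := by
    have h5 := (le_abs_self _).trans (f.le_opNorm (y - w))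
    refine h5.trans ?_
    have h6 : ‖y - w‖ ≤ ‖a - b‖ := norm_le_norm_of_abs_le_abs hyw
    exact mul_le_mul_of_nonneg_left h6 (norm_nonneg f)
  rw [hfy]; exact add_le_add h3 h4

end AuxLemmas

section Comp

variable [NormedAddCommGroup F] [Lattice F] [HasSolidNorm F] [IsOrderedAddMonoid F] [NormedSpace ℝ F]
  [NormedAddCommGroup G] [Lattice G] [HasSolidNorm G] [IsOrderedAddMonoid G] [NormedSpace ℝ G]

lemma absEval_comp_le (f : G →L[ℝ] ℝ) (S : F →L[ℝ] G)
    (hS : ∀ x : F, 0 ≤ x → 0 ≤ S x) {y : F} (hy : 0 ≤ y) :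
    absEval (f.comp S) y ≤ absEval f (S y) := by
  have hne : Nonempty {u : F // |u| ≤ y} := ⟨⟨0, by simpa using hy⟩⟩
  refine ciSup_le ?_
  rintro ⟨u, hu⟩
  have hSu : |S u| ≤ S y := by
    have h1 : S u ≤ S |u| := by
      have := hS (|u| - u) (by simp [le_abs_self])
      simpa [map_sub, sub_nonneg] using this
    have h2 : -(S u) ≤ S |u| := by
      have h7 := hS (|u| + u) (by rw [← sub_neg_eq_add, sub_nonneg]; exact neg_le_abs u)
      rw [map_add] at h7
      rwa [← sub_neg_eq_add, sub_nonneg] at h7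
    have h3 : S |u| ≤ S y := by
      have := hS (y - |u|) (by rwa [sub_nonneg])
      simpa [map_sub, sub_nonneg] using this
    exact abs_le'.2 ⟨h1.trans h3, h2.trans h3⟩
  exact le_ciSup (absEval_bddAbove f (hS y hy)) ⟨S u, hSu⟩

lemma disjointPair_comp {f g : G →L[ℝ] ℝ} (S : F →L[ℝ] G)
    (hS : AlmostIntervalPreserving S) (h : DisjointPair f g) :
    DisjointPair (f.comp S) (g.comp S) := by
  obtain ⟨hSpos, hSdense⟩ := hS
  intro x hx
  have hSx : 0 ≤ S x := hSpos x hx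
  have hne : Nonempty {y : F // 0 ≤ y ∧ y ≤ x} := ⟨⟨0, le_refl 0, hx⟩⟩
  have hneG : Nonempty {z : G // 0 ≤ z ∧ z ≤ S x} := ⟨⟨0, le_refl 0, hSx⟩⟩
  have hbdd : BddBelow (Set.range fun y : {y : F // 0 ≤ y ∧ y ≤ x} =>
      absEval (f.comp S) y.1 + absEval (g.comp S) (x - y.1)) := by
    refine ⟨0, ?_⟩
    rintro r ⟨⟨y, hy0, hyx⟩, rfl⟩
    exact add_nonneg (absEval_nonneg _ hy0) (absEval_nonneg _ (by rwa [sub_nonneg]))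
  refine le_antisymm ?_ ?_
  · -- iInf ≤ 0 : show iInf ≤ ε for all ε > 0
    refine le_of_forall_pos_le_add ?_
    intro ε hε
    set δ : ℝ := ε / (2 * (‖f‖ + ‖g‖ + 1)) with hδdef
    have hden : (0:ℝ) < 2 * (‖f‖ + ‖g‖ + 1) := by positivity
    have hδ : 0 < δ := div_pos hε hden
    -- use disjointness of f, g at S x
    have h0 := h (S x) hSx
    have hlt : (⨅ z : {z : G // 0 ≤ z ∧ z ≤ S x},
        (absEval f z.1 + absEval g (S x - z.1))) < ε / 2 := by
      rw [h0]; positivity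
    obtain ⟨⟨z, hz0, hzSx⟩, hzlt⟩ := exists_lt_of_ciInf_lt hlt
    -- approximate z by S y, y ∈ [0, x]
    have hzcl : z ∈ closure (S '' Set.Icc 0 x) := hSdense x hx ⟨hz0, hzSx⟩
    obtain ⟨w, hwmem, hwz⟩ := Metric.mem_closure_iff.1 hzcl δ hδ
    obtain ⟨y, hy, rfl⟩ := hwmem
    obtain ⟨hy0, hyx⟩ := hy
    have hdist : ‖S y - z‖ < δ := by rwa [dist_eq_norm, norm_sub_rev] at hwz
    have key : absEval (f.comp S) y + absEval (g.comp S) (x - y) ≤ 0 + ε := by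
      have e1 : absEval (f.comp S) y ≤ absEval f z + ‖f‖ * ‖S y - z‖ :=
        (absEval_comp_le f S hSpos hy0).trans (absEval_le_add f (hSpos y hy0) hz0)
      have e2 : absEval (g.comp S) (x - y) ≤ absEval g (S x - z) + ‖g‖ * ‖S y - z‖ := by
        have hx_y : (0:F) ≤ x - y := by rwa [sub_nonneg]
        refine (absEval_comp_le g S hSpos hx_y).trans ?_
        have := absEval_le_add g (hSpos _ hx_y) (by rwa [sub_nonneg] : (0:G) ≤ S x - z)
        have heq : S (x - y) - (S x - z) = z - S y := by rw [map_sub]; abel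
        rw [heq, norm_sub_rev] at this
        exact this
      have e3 : ‖f‖ * ‖S y - z‖ + ‖g‖ * ‖S y - z‖ ≤ ε / 2 := by
        have : (‖f‖ + ‖g‖) * ‖S y - z‖ ≤ (‖f‖ + ‖g‖ + 1) * δ := by
          apply mul_le_mul (by linarith) hdist.le (norm_nonneg _)
          positivity
        have hδle : (‖f‖ + ‖g‖ + 1) * δ = ε / 2 := by
          rw [hδdef]; field_simp
        nlinarith [this]
      nlinarith [e1, e2, hzlt, e3]
    calc (⨅ y : {y : F // 0 ≤ y ∧ y ≤ x},
        (absEval (f.comp S) y.1 + absEval (g.comp S) (x - y.1)))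
        ≤ absEval (f.comp S) y + absEval (g.comp S) (x - y) :=
          ciInf_le hbdd ⟨y, hy0, hyx⟩
      _ ≤ 0 + ε := key
  · refine le_ciInf ?_
    rintro ⟨y, hy0, hyx⟩
    exact add_nonneg (absEval_nonneg _ hy0) (absEval_nonneg _ (by rwa [sub_nonneg]))

end Comp

/-- The composition of an order almost Dunford-Pettis operator with an almost interval
preserving operator is order almost Dunford-Pettis. -/
theorem comp_almostIntervalPreserving_orderAlmostDP [NormedAddCommGroup E] [Lattice E] [HasSolidNorm E] [IsOrderedAddMonoid E] [NormedSpace ℝ E] [PosSMulStrictMono ℝ E] [CompleteSpace E] [NormedAddCommGroup F] [Lattice F] [HasSolidNorm F] [IsOrderedAddMonoid F] [NormedSpace ℝ F] [PosSMulStrictMono ℝ F] [CompleteSpace F] [NormedAddCommGroup G] [Lattice G] [HasSolidNorm G] [IsOrderedAddMonoid G] [NormedSpace ℝ G] [PosSMulStrictMono ℝ G] [CompleteSpace G]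
    (T : E →L[ℝ] F) (hT : OrderAlmostDP T)
    (S : F →L[ℝ] G) (hS : AlmostIntervalPreserving S) :
    OrderAlmostDP (S.comp T) := by
  intro x hx f hdis hweak
  set Sc : (G →L[ℝ] ℝ) →L[ℝ] (F →L[ℝ] ℝ) := (ContinuousLinearMap.compL ℝ F G ℝ).flip S with hSc
  set g : ℕ → F →L[ℝ] ℝ := fun n => (f n).comp S with hg
  have hgdis : DisjointSeqDual g := fun n m hnm => disjointPair_comp S hS (hdis n m hnm)
  have hgweak : WeaklyNullSeq g := by
    intro φ
    have := hweak (φ.comp Sc)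
    simpa [hg, hSc] using this
  have hmain := hT x hx g hgdis hgweak
  have hset : ∀ n, (⨆ b : ↥(T '' Set.Icc (-x) x), |g n b.1|) =
      ⨆ a : ↥((S.comp T) '' Set.Icc (-x) x), |f n a.1| := by
    intro n
    rw [← sSup_range, ← sSup_range]
    congr 1
    ext r
    constructor
    · rintro ⟨⟨b, c, hc, rfl⟩, rfl⟩
      exact ⟨⟨S (T c), ⟨c, hc, rfl⟩⟩, rfl⟩
    · rintro ⟨⟨a, c, hc, rfl⟩, rfl⟩
      exact ⟨⟨T c, ⟨c, hc, rfl⟩⟩, rfl⟩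
  exact hmain.congr hset
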